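/- In the setting of an elliptic basis, for k and l distinct and nonzero in ℤ/dℤ, the product formula ω_k·ω_l = ξ₀ + Γ_{-k,-l}·ω_k + Γ_{k,l}·ω_l + ν_k + ν_l + a₂ holds, where ξ₀ = x_O(b), ν_k = x_O(kt), and Γ_{k,l} = Γ(O,kt,lt). -/

import Mathlib

set_option maxHeartbeats 1000000


noncomputable section
namespace EllipticPeriods

variable {F : Type*} [Field F]

/-- x-coordinate of an affine point, with junk value 0 at the point at infinity. -/
def xc {W : WeierstrassCurve.Affine F} : W.Point → F
  | .zero => 0
  | @WeierstrassCurve.Affine.Point.some _ _ _ x _ _ => x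

/-- y-coordinate of an affine point, with junk value 0 at the point at infinity. -/
def yc {W : WeierstrassCurve.Affine F} : W.Point → F
  | .zero => 0
  | @WeierstrassCurve.Affine.Point.some _ _ _ _ y _ => y

open Classical in
/-- The function `u_{A,B} = (y_A - y(A-B))/(x_A - x(A-B))`, evaluated at `P`: this is the
slope of the line (secant, or tangent in the degenerate case) through the points
`P - A` and `A - B` of the curve. -/
def uf (W : WeierstrassCurve.Affine F) (A B P : W.Point) : F :=
  W.slope (xc (P - A)) (xc (A - B)) (yc (P - A)) (yc (A - B))

/-- `Γ(A,B,C) = u_{A,B}(C)`. -/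
def Gam (W : WeierstrassCurve.Affine F) (A B C : W.Point) : F := uf W A B C

open WeierstrassCurve.Affine

@[simp] lemma xc_some {W : WeierstrassCurve.Affine F} {x y : F} (h : W.Nonsingular x y) :
    xc (WeierstrassCurve.Affine.Point.some _ _ h) = x := rfl

@[simp] lemma yc_some {W : WeierstrassCurve.Affine F} {x y : F} (h : W.Nonsingular x y) :
    yc (WeierstrassCurve.Affine.Point.some _ _ h) = y := rfl

lemma some_eq_some {W : WeierstrassCurve.Affine F} {x y x' y' : F} (h : W.Nonsingular x y)
    (h' : W.Nonsingular x' y') (hx : x = x') (hy : y = y') :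
    WeierstrassCurve.Affine.Point.some _ _ h = WeierstrassCurve.Affine.Point.some _ _ h' := by
  subst hx; subst hy; rfl

open Classical in
/-- the product formula in the elliptic basis, for distinct nonzero
`k, l ∈ ℤ/dℤ`: `ω_k·ω_l = ξ₀ + Γ_{-k,-l}·ω_k + Γ_{k,l}·ω_l + ν_k + ν_l + a₂`, where
`ξ₀ = x_O(b) = x(b)`, `ν_k = x_O(kt) = x(kt)` and `Γ_{k,l} = Γ(O,kt,lt)`. -/
theorem omega_mul {K L : Type*} [Field K] [Fintype K] [Field L] [Algebra K L]
    (d : ℕ) (hd : 2 ≤ d) (hrank : Module.finrank K L = d)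
    (W : WeierstrassCurve.Affine L)
    (hW : W.a₁ ^ Fintype.card K = W.a₁ ∧ W.a₂ ^ Fintype.card K = W.a₂ ∧
      W.a₃ ^ Fintype.card K = W.a₃ ∧ W.a₄ ^ Fintype.card K = W.a₄ ∧
      W.a₆ ^ Fintype.card K = W.a₆)
    (φ : W.Point → W.Point)
    (hφ : ∀ P : W.Point, xc (φ P) = xc P ^ Fintype.card K ∧
      yc (φ P) = yc P ^ Fintype.card K ∧ (φ P = 0 ↔ P = 0))
    (t : W.Point) (ht : addOrderOf t = d) (htK : φ t = t)
    (b : W.Point) (hb : φ b = b + t) (hbd : d • b ≠ 0)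
    (ω : ZMod d → L)
    (hω : ∀ k : ZMod d, ω k = if k = 0 then 1 else uf W 0 (k.val • t) b) :
    ∀ k l : ZMod d, k ≠ 0 → l ≠ 0 → k ≠ l →
      ω k * ω l =
        xc b + Gam W 0 ((-k).val • t) ((-l).val • t) * ω k +
          Gam W 0 (k.val • t) (l.val • t) * ω l +
          xc (k.val • t) + xc (l.val • t) + W.a₂ := by
  intro k l hk hl hkl
  haveI : NeZero d := ⟨by omega⟩
  have hdt : d • t = 0 := by rw [← ht]; exact addOrderOf_nsmul_eq_zero t
  have hmod : ∀ m : ℕ, m • t = (m % d) • t := by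
    intro m
    conv_lhs => rw [← Nat.div_add_mod m d]
    rw [add_nsmul, mul_comm, mul_nsmul, smul_comm, hdt, smul_zero, zero_add]
  have hadd : ∀ i j : ZMod d, (i + j).val • t = i.val • t + j.val • t := by
    intro i j
    rw [ZMod.val_add, ← hmod, add_nsmul]
  have hzero : ∀ j : ZMod d, j.val • t = 0 ↔ j = 0 := by
    intro j
    constructor
    · intro h
      have hdvd : addOrderOf t ∣ j.val := addOrderOf_dvd_iff_nsmul_eq_zero.mpr h
      rw [ht] at hdvd
      exact (ZMod.val_eq_zero j).mp (Nat.eq_zero_of_dvd_of_lt hdvd (ZMod.val_lt j))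
    · rintro rfl; simp
  have hneg : ∀ j : ZMod d, (-j).val • t = -(j.val • t) := by
    intro j
    have h0 : (-j + j).val • t = 0 := by rw [neg_add_cancel]; simp
    rw [hadd] at h0
    exact eq_neg_of_add_eq_zero_left h0
  have hinj : ∀ i j : ZMod d, i.val • t = j.val • t → i = j := by
    intro i j hij
    have h0 : (i + -j).val • t = 0 := by rw [hadd, hneg, hij, add_neg_cancel]
    have h1 := (hzero _).mp h0
    rwa [add_neg_eq_zero] at h1
  have hds : ∀ j : ZMod d, d • (j.val • t) = 0 := by
    intro j; rw [smul_comm, hdt, smul_zero]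
  have hbne : ∀ j : ZMod d, b ≠ j.val • t ∧ b ≠ -(j.val • t) := by
    intro j
    constructor
    · rintro rfl; exact hbd (hds j)
    · intro h; apply hbd; rw [h, smul_neg, hds, neg_zero]
  have hb0 : b ≠ 0 := fun h => hbd (by rw [h, smul_zero])
  have hs0 : k.val • t ≠ 0 := fun h => hk ((hzero k).mp h)
  have hr0 : l.val • t ≠ 0 := fun h => hl ((hzero l).mp h)
  have hbk := hbne k
  have hbl := hbne l
  rcases hB : b with _ | @⟨x₀, y₀, h₀⟩
  · exact absurd hB hb0
  rcases hS : (k.val • t) with _ | @⟨x₁, y₁, h₁⟩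
  · exact absurd hS hs0
  rcases hR : (l.val • t) with _ | @⟨x₂, y₂, h₂⟩
  · exact absurd hR hr0
  rw [hB] at hbk hbl
  rw [hS] at hbk
  rw [hR] at hbl
  have e₀ := (W.equation_iff x₀ y₀).mp h₀.1
  have e₁ := (W.equation_iff x₁ y₁).mp h₁.1
  have e₂ := (W.equation_iff x₂ y₂).mp h₂.1
  have hx01 : x₀ ≠ x₁ := by
    intro hx
    rcases Y_eq_of_X_eq h₀.1 h₁.1 hx with hy | hy
    · exact hbk.1 (some_eq_some h₀ h₁ hx hy)
    · exact hbk.2 (by rw [Point.neg_some]; exact some_eq_some h₀ _ hx hy)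
  have hx02 : x₀ ≠ x₂ := by
    intro hx
    rcases Y_eq_of_X_eq h₀.1 h₂.1 hx with hy | hy
    · exact hbl.1 (some_eq_some h₀ h₂ hx hy)
    · exact hbl.2 (by rw [Point.neg_some]; exact some_eq_some h₀ _ hx hy)
  rw [hω k, hω l, if_neg hk, if_neg hl]
  simp only [Gam, uf, sub_zero, zero_sub, hneg k, hneg l, neg_neg, hB, hS, hR, Point.neg_some,
    xc_some, yc_some]
  by_cases hlk : l = -k
  · -- degenerate case: lt = -kt
    have hRS : WeierstrassCurve.Affine.Point.some _ _ h₂ =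
        WeierstrassCurve.Affine.Point.some _ _ ((nonsingular_neg ..).mpr h₁) := by
      rw [← hR, ← Point.neg_some h₁, ← hS, hlk, hneg]
    have hx21 : x₂ = x₁ := congrArg xc hRS
    have hy21 : y₂ = W.negY x₁ y₁ := congrArg yc hRS
    rw [hy21, hx21] at e₂ ⊢
    rw [hx21] at hx02
    have hkk : k + k ≠ 0 := by
      intro h
      exact hkl (by rw [hlk]; exact eq_neg_of_add_eq_zero_left h)
    have hy1 : y₁ ≠ W.negY x₁ y₁ := by
      intro h
      have hPn : WeierstrassCurve.Affine.Point.some _ _ h₁ =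
          -WeierstrassCurve.Affine.Point.some _ _ h₁ := by
        rw [Point.neg_some]; exact some_eq_some h₁ _ rfl h
      have h2 : (k + k).val • t ≠ 0 := fun hc => hkk ((hzero _).mp hc)
      apply h2
      rw [hadd, hS]
      nth_rewrite 2 [hPn]
      rw [add_neg_cancel]
    have hy1' : W.negY x₁ y₁ ≠ W.negY x₁ (W.negY x₁ y₁) := by
      rw [negY_negY]; exact fun hh => hy1 hh.symm
    rw [slope_of_X_ne hx01, slope_of_Y_ne rfl hy1', slope_of_Y_ne rfl (by rw [negY_negY]; exact hy1)]
    rw [negY_negY, slope_of_X_ne hx01]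
    simp only [negY]
    have d01 : x₀ - x₁ ≠ 0 := sub_ne_zero.mpr hx01
    have dz : y₁ - (-y₁ - W.a₁ * x₁ - W.a₃) ≠ 0 := by
      intro h; exact hy1 (by rw [negY]; linear_combination h)
    have dz' : -y₁ - W.a₁ * x₁ - W.a₃ - y₁ ≠ 0 := by
      intro h; apply dz; linear_combination -h
    field_simp
    linear_combination (-(2 * y₁ + W.a₁ * x₁ + W.a₃) ^ 2) * (e₀ - e₁)
  · -- generic case
    have hrs : WeierstrassCurve.Affine.Point.some _ _ h₂ ≠ WeierstrassCurve.Affine.Point.some _ _ h₁ := by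
      rw [← hR, ← hS]; intro h; exact hkl (hinj l k h).symm
    have hrns : WeierstrassCurve.Affine.Point.some _ _ h₂ ≠ -WeierstrassCurve.Affine.Point.some _ _ h₁ := by
      rw [← hR, ← hS, ← hneg]; intro h; exact hlk (hinj l (-k) h)
    have hx21 : x₂ ≠ x₁ := by
      intro hx
      rcases Y_eq_of_X_eq h₂.1 h₁.1 hx with hy | hy
      · exact hrs (some_eq_some h₂ h₁ hx hy)
      · exact hrns (by rw [Point.neg_some]; exact some_eq_some h₂ _ hx hy)
    rw [slope_of_X_ne hx01, slope_of_X_ne hx02, slope_of_X_ne hx21, slope_of_X_ne hx21]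
    simp only [negY]
    have d01 : x₀ - x₁ ≠ 0 := sub_ne_zero.mpr hx01
    have d02 : x₀ - x₂ ≠ 0 := sub_ne_zero.mpr hx02
    have d21 : x₂ - x₁ ≠ 0 := sub_ne_zero.mpr hx21
    field_simp
    linear_combination (-1 : L) *
      ((x₁ - x₂) * e₀ + (x₂ - x₀) * e₁ + (x₀ - x₁) * e₂)

end EllipticPeriods
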